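/- For the SSP instance with aᵢ = 2^{k+n+1} + 2^{k+i} + 1 where k = ⌊log₂ n⌋, all 2ⁿ subset sums of {a₁,…,aₙ} are pairwise distinct. -/

import Mathlib

lemma aux_geom_icc (n : ℕ) : ∑ i ∈ Finset.Icc 1 n, 2 ^ i = 2 ^ (n + 1) - 2 := by
  induction n with
  | zero => simp
  | succ m ih =>
    rw [Finset.sum_Icc_succ_top (by omega), ih]
    have h2 : 2 ≤ 2 ^ (m + 1) := Nat.one_lt_two_pow (by omega)
    have : 2 ^ (m + 1 + 1) = 2 ^ (m + 1) + 2 ^ (m + 1) := by ring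
    omega

/-- For the SSP instance `aᵢ = 2^(k+n+1) + 2^(k+i) + 1` with `k = ⌊log₂ n⌋`,
all `2ⁿ` subset sums of `{a₁, …, aₙ}` are pairwise distinct. -/
theorem stmt17 (n : ℕ) (hn : 1 ≤ n) :
    let k := Nat.log 2 n
    let a : ℕ → ℕ := fun i => 2 ^ (k + n + 1) + 2 ^ (k + i) + 1
    ∀ S ⊆ Finset.Icc 1 n, ∀ S' ⊆ Finset.Icc 1 n,
      (∑ i ∈ S, a i) = (∑ i ∈ S', a i) → S = S' := by
  intro k a S hS S' hS' hsum
  set M := 2 ^ (k + n + 1) with hM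
  -- decompose the sum
  have hdec : ∀ T : Finset ℕ, (∑ i ∈ T, a i)
      = (∑ i ∈ T, 2 ^ (k + i) + T.card) + T.card * M := by
    intro T
    simp only [a, Finset.sum_add_distrib, Finset.sum_const, smul_eq_mul, mul_one]
    ring
  -- bound on the remainder
  have hnlt : n < 2 ^ (k + 1) := Nat.lt_pow_succ_log_self (by norm_num) n
  have hrem : ∀ T : Finset ℕ, T ⊆ Finset.Icc 1 n →
      ∑ i ∈ T, 2 ^ (k + i) + T.card < M := by
    intro T hT
    have h1 : ∑ i ∈ T, 2 ^ (k + i) ≤ ∑ i ∈ Finset.Icc 1 n, 2 ^ (k + i) :=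
      Finset.sum_le_sum_of_subset hT
    have h2 : ∑ i ∈ Finset.Icc 1 n, 2 ^ (k + i) = 2 ^ k * (2 ^ (n + 1) - 2) := by
      rw [← aux_geom_icc, Finset.mul_sum]
      exact Finset.sum_congr rfl fun i _ => by rw [pow_add]
    have h3 : T.card ≤ n := by
      calc T.card ≤ (Finset.Icc 1 n).card := Finset.card_le_card hT
      _ = n := by simp
    have h4 : 2 ≤ 2 ^ (n + 1) := Nat.one_lt_two_pow (by omega)
    have h5 : 2 ^ k * (2 ^ (n + 1) - 2) = M - 2 ^ (k + 1) := by
      rw [hM, Nat.mul_sub]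
      congr 1 <;> ring
    have h6 : 2 ^ (k + 1) ≤ M := Nat.pow_le_pow_right (by norm_num) (by omega)
    omega
  rw [hdec S, hdec S'] at hsum
  have hMpos : 0 < M := Nat.pow_pos (by norm_num)
  -- extract equality of cards via division
  have hcard : S.card = S'.card := by
    have h1 := hrem S hS
    have h2 := hrem S' hS'
    have := congrArg (· / M) hsum
    simpa [Nat.add_mul_div_right _ _ hMpos, Nat.div_eq_of_lt h1, Nat.div_eq_of_lt h2] using this
  have hrs : ∑ i ∈ S, 2 ^ (k + i) = ∑ i ∈ S', 2 ^ (k + i) := by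
    have h1 := hrem S hS
    have h2 := hrem S' hS'
    have h3 : S.card * M = S'.card * M := by rw [hcard]
    omega
  have hpow : (∑ i ∈ S, 2 ^ i) = ∑ i ∈ S', 2 ^ i := by
    have : 2 ^ k * ∑ i ∈ S, 2 ^ i = 2 ^ k * ∑ i ∈ S', 2 ^ i := by
      rw [Finset.mul_sum, Finset.mul_sum]
      simpa [pow_add] using hrs
    exact Nat.eq_of_mul_eq_mul_left (Nat.pow_pos (by norm_num)) this
  exact Finset.geomSum_injective (le_refl 2) hpow
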